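/- Let G be a finite non-cyclic group. Then neither the power graph P(G) nor the enhanced power graph P_E(G) is a line graph of any graph. -/

import Mathlib

open Subgroup

/-- A graph is a line graph if it is isomorphic to the line graph of some graph. -/
def IsLineGraph {V : Type} (Γ : SimpleGraph V) : Prop :=
  ∃ (W : Type) (H : SimpleGraph W), Nonempty (Γ ≃g H.lineGraph)

/-- The power graph of a group: distinct `x`, `y` are adjacent iff one is a power
of the other. -/
def powerGraph (G : Type) [Group G] : SimpleGraph G where
  Adj x y := x ≠ y ∧ (x ∈ zpowers y ∨ y ∈ zpowers x)
  symm := by constructor; rintro x y ⟨hne, h⟩; exact ⟨hne.symm, h.symm⟩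
  loopless := by constructor; rintro x ⟨hne, _⟩; exact hne rfl

/-- The enhanced power graph of a group: distinct `x`, `y` are adjacent iff both are
powers of a common element. -/
def enhancedPowerGraph (G : Type) [Group G] : SimpleGraph G where
  Adj x y := x ≠ y ∧ ∃ z : G, x ∈ zpowers z ∧ y ∈ zpowers z
  symm := by constructor; rintro x y ⟨hne, z, hx, hy⟩; exact ⟨hne.symm, z, hy, hx⟩
  loopless := by constructor; rintro x ⟨hne, _⟩; exact hne rfl

/-- A vertex is dominating if it is adjacent to all other vertices. -/
def IsDominatingVertex {V : Type} (Γ : SimpleGraph V) (v : V) : Prop :=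
  ∀ w : V, w ≠ v → Γ.Adj v w

/-- The graph induced on the non-dominating vertices. -/
def properGraph {V : Type} (Γ : SimpleGraph V) :
    SimpleGraph {v : V | ¬ IsDominatingVertex Γ v} :=
  Γ.induce {v : V | ¬ IsDominatingVertex Γ v}

/-- The proper power graph `P**(G)`. -/
abbrev properPowerGraph (G : Type) [Group G] := properGraph (powerGraph G)

/-- The proper enhanced power graph `P_E**(G)`. -/
abbrev properEnhancedPowerGraph (G : Type) [Group G] := properGraph (enhancedPowerGraph G)

/-- A maximal cyclic subgroup: cyclic and not properly contained in a cyclic subgroup. -/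
def IsMaxCyclic {G : Type} [Group G] (M : Subgroup G) : Prop :=
  IsCyclic M ∧ ∀ N : Subgroup G, IsCyclic N → M ≤ N → N = M

/-- `T(G)`: the intersection of all maximal cyclic subgroups of `G`. -/
def cyclicCore (G : Type) [Group G] : Subgroup G :=
  ⨅ (M : Subgroup G) (_ : IsMaxCyclic M), M

/-- `G` is an elementary abelian 2-group `Z₂ × ⋯ × Z₂`. -/
def IsElemAbelianTwo (G : Type) [Group G] : Prop :=
  ∃ k : ℕ, 1 ≤ k ∧ Nonempty (G ≃* (Fin k → Multiplicative (ZMod 2)))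


section Aux

open SimpleGraph

/-- `zpowers g` is a cyclic group. -/
lemma isCyclic_zpowers {G : Type} [Group G] (g : G) : IsCyclic (zpowers g) := by
  refine ⟨⟨g, mem_zpowers g⟩, fun x => ?_⟩
  obtain ⟨n, hn⟩ := x.2
  exact ⟨n, Subtype.ext (by simpa using hn)⟩

/-- A cyclic subgroup is generated (as zpowers) by some element. -/
lemma exists_zpowers_eq {G : Type} [Group G] (M : Subgroup G) (hM : IsCyclic M) :
    ∃ g : G, zpowers g = M := by
  obtain ⟨⟨g, hgM⟩, hgen⟩ := hM.exists_generator
  refine ⟨g, le_antisymm (zpowers_le.2 hgM) ?_⟩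
  intro x hx
  obtain ⟨n, hn⟩ := hgen ⟨x, hx⟩
  exact ⟨n, congrArg Subtype.val hn⟩

/-- Line graphs are claw-free: among three distinct common neighbors, two are adjacent. -/
lemma lineGraph_no_claw {W : Type} (H : SimpleGraph W) {e a b c : H.edgeSet}
    (hab : a ≠ b) (hac : a ≠ c) (hbc : b ≠ c)
    (ha : H.lineGraph.Adj e a) (hb : H.lineGraph.Adj e b) (hc : H.lineGraph.Adj e c) :
    H.lineGraph.Adj a b ∨ H.lineGraph.Adj a c ∨ H.lineGraph.Adj b c := by
  obtain ⟨⟨u, w⟩, he⟩ := Quot.exists_rep (e : Sym2 W)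
  have key : ∀ x : H.edgeSet, H.lineGraph.Adj e x →
      u ∈ (x : Sym2 W) ∨ w ∈ (x : Sym2 W) := by
    intro x hx
    obtain ⟨-, v, hv1, hv2⟩ := lineGraph_adj_iff_exists.1 hx
    have : v ∈ s(u, w) := by rw [show (s(u, w) : Sym2 W) = ↑e from he]; exact hv1
    rcases Sym2.mem_iff.1 this with rfl | rfl
    · exact Or.inl hv2
    · exact Or.inr hv2
  have adj_of : ∀ (x y : H.edgeSet) (v : W), x ≠ y → v ∈ (x : Sym2 W) → v ∈ (y : Sym2 W) →
      H.lineGraph.Adj x y := fun x y v hxy h1 h2 =>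
    lineGraph_adj_iff_exists.2 ⟨hxy, v, h1, h2⟩
  rcases key a ha with h1 | h1 <;> rcases key b hb with h2 | h2 <;> rcases key c hc with h3 | h3
  · exact Or.inl (adj_of a b _ hab h1 h2)
  · exact Or.inl (adj_of a b _ hab h1 h2)
  · exact Or.inr (Or.inl (adj_of a c _ hac h1 h3))
  · exact Or.inr (Or.inr (adj_of b c _ hbc h2 h3))
  · exact Or.inr (Or.inr (adj_of b c _ hbc h2 h3))
  · exact Or.inr (Or.inl (adj_of a c _ hac h1 h3))
  · exact Or.inl (adj_of a b _ hab h1 h2)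
  · exact Or.inl (adj_of a b _ hab h1 h2)

/-- A graph containing an induced claw is not a line graph. -/
lemma not_isLineGraph_of_claw {V : Type} (Γ : SimpleGraph V) (v a b c : V)
    (hab : a ≠ b) (hac : a ≠ c) (hbc : b ≠ c)
    (ha : Γ.Adj v a) (hb : Γ.Adj v b) (hc : Γ.Adj v c)
    (nab : ¬ Γ.Adj a b) (nac : ¬ Γ.Adj a c) (nbc : ¬ Γ.Adj b c) :
    ¬ IsLineGraph Γ := by
  rintro ⟨W, H, ⟨φ⟩⟩
  have hab' : φ a ≠ φ b := fun h => hab (φ.toEquiv.injective h)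
  have hac' : φ a ≠ φ c := fun h => hac (φ.toEquiv.injective h)
  have hbc' : φ b ≠ φ c := fun h => hbc (φ.toEquiv.injective h)
  rcases lineGraph_no_claw H hab' hac' hbc'
      (φ.map_adj_iff.2 ha) (φ.map_adj_iff.2 hb) (φ.map_adj_iff.2 hc) with h | h | h
  · exact nab (φ.map_adj_iff.1 h)
  · exact nac (φ.map_adj_iff.1 h)
  · exact nbc (φ.map_adj_iff.1 h)

/-- Every element of a finite group lies in a maximal cyclic subgroup. -/
lemma exists_maxCyclic_mem {G : Type} [Group G] [Fintype G] (g : G) :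
    ∃ M : Subgroup G, IsMaxCyclic M ∧ g ∈ M := by
  have hfin : (Set.univ : Set (Subgroup G)).Finite := Set.finite_univ
  obtain ⟨M, hM, hmax⟩ := Set.Finite.exists_maximalFor (fun N : Subgroup G => N)
      {N : Subgroup G | IsCyclic N ∧ g ∈ N} (hfin.subset (Set.subset_univ _))
      ⟨zpowers g, _root_.isCyclic_zpowers g, mem_zpowers g⟩
  refine ⟨M, ⟨hM.1, fun N hN hle => ?_⟩, hM.2⟩
  exact le_antisymm (hmax ⟨hN, hle hM.2⟩ hle) hle

/-- A group is not the union of two proper subgroups. -/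
lemma exists_not_mem_union {G : Type} [Group G] (A B : Subgroup G)
    (hA : A ≠ ⊤) (hB : B ≠ ⊤) : ∃ g : G, g ∉ A ∧ g ∉ B := by
  by_contra h
  push_neg at h
  obtain ⟨a, haB⟩ : ∃ a : G, a ∉ B := by
    by_contra hb; push_neg at hb; exact hB ((Subgroup.eq_top_iff' B).2 hb)
  obtain ⟨b, hbA⟩ : ∃ b : G, b ∉ A := by
    by_contra ha; push_neg at ha; exact hA ((Subgroup.eq_top_iff' A).2 ha)
  have haA : a ∈ A := by by_contra haA; exact haB (h a haA)
  have hbB : b ∈ B := h b hbA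
  by_cases hab : a * b ∈ A
  · exact hbA (by simpa using mul_mem (inv_mem haA) hab)
  · exact haB (by simpa using mul_mem (h _ hab) (inv_mem hbB))

/-- In a nontrivial group, a maximal cyclic subgroup is nontrivial. -/
lemma IsMaxCyclic.ne_bot {G : Type} [Group G] [Nontrivial G] {M : Subgroup G}
    (hM : IsMaxCyclic M) : M ≠ ⊥ := by
  rintro rfl
  obtain ⟨g, hg⟩ := exists_ne (1 : G)
  have := hM.2 (zpowers g) (_root_.isCyclic_zpowers g) bot_le
  exact hg (by simpa [this] using mem_zpowers g)

/-- In a non-cyclic group, a maximal cyclic subgroup is proper. -/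
lemma IsMaxCyclic.ne_top {G : Type} [Group G] (hnc : ¬ IsCyclic G) {M : Subgroup G}
    (hM : IsMaxCyclic M) : M ≠ ⊤ := by
  rintro rfl
  haveI := hM.1
  exact hnc (isCyclic_of_surjective _ (Subgroup.topEquiv (G := G)).surjective)

/-- In a finite non-cyclic group, there are three distinct maximal cyclic subgroups. -/
lemma exists_three_maxCyclic {G : Type} [Group G] [Fintype G] (hnc : ¬ IsCyclic G) :
    ∃ M₁ M₂ M₃ : Subgroup G, IsMaxCyclic M₁ ∧ IsMaxCyclic M₂ ∧ IsMaxCyclic M₃ ∧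
      M₁ ≠ M₂ ∧ M₁ ≠ M₃ ∧ M₂ ≠ M₃ := by
  obtain ⟨M₁, hM₁, -⟩ := exists_maxCyclic_mem (1 : G)
  obtain ⟨g, hg⟩ : ∃ g : G, g ∉ M₁ := by
    by_contra h; push_neg at h; exact hM₁.ne_top hnc ((Subgroup.eq_top_iff' M₁).2 h)
  obtain ⟨M₂, hM₂, hgM₂⟩ := exists_maxCyclic_mem g
  obtain ⟨x, hx₁, hx₂⟩ := exists_not_mem_union M₁ M₂ (hM₁.ne_top hnc) (hM₂.ne_top hnc)
  obtain ⟨M₃, hM₃, hxM₃⟩ := exists_maxCyclic_mem x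
  exact ⟨M₁, M₂, M₃, hM₁, hM₂, hM₃,
    fun h => hg (h ▸ hgM₂), fun h => hx₁ (h ▸ hxM₃), fun h => hx₂ (h ▸ hxM₃)⟩

end Aux

/-- for a finite non-cyclic group, neither the power graph nor the enhanced
power graph is a line graph. -/
theorem not_isLineGraph_of_not_isCyclic (G : Type) [Group G] [Fintype G]
    (hnc : ¬ IsCyclic G) :
    ¬ IsLineGraph (powerGraph G) ∧ ¬ IsLineGraph (enhancedPowerGraph G) := by
  haveI : Nontrivial G := by
    rcases subsingleton_or_nontrivial G with h | h
    · exact absurd isCyclic_of_subsingleton hnc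
    · exact h
  obtain ⟨M₁, M₂, M₃, hM₁, hM₂, hM₃, h12, h13, h23⟩ := exists_three_maxCyclic hnc
  obtain ⟨x₁, hx₁⟩ := exists_zpowers_eq M₁ hM₁.1
  obtain ⟨x₂, hx₂⟩ := exists_zpowers_eq M₂ hM₂.1
  obtain ⟨x₃, hx₃⟩ := exists_zpowers_eq M₃ hM₃.1
  have hne1 : x₁ ≠ 1 := by rintro rfl; exact hM₁.ne_bot (by rw [← hx₁]; simp)
  have hne2 : x₂ ≠ 1 := by rintro rfl; exact hM₂.ne_bot (by rw [← hx₂]; simp)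
  have hne3 : x₃ ≠ 1 := by rintro rfl; exact hM₃.ne_bot (by rw [← hx₃]; simp)
  have d12 : x₁ ≠ x₂ := by rintro rfl; exact h12 (hx₁ ▸ hx₂)
  have d13 : x₁ ≠ x₃ := by rintro rfl; exact h13 (hx₁ ▸ hx₃)
  have d23 : x₂ ≠ x₃ := by rintro rfl; exact h23 (hx₂ ▸ hx₃)
  -- non-adjacency in the enhanced power graph
  have nadjE : ∀ (a b : G) (Ma Mb : Subgroup G), IsMaxCyclic Ma → IsMaxCyclic Mb →
      zpowers a = Ma → zpowers b = Mb → Ma ≠ Mb → ¬ (enhancedPowerGraph G).Adj a b := by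
    rintro a b Ma Mb hMa hMb ha hb hab ⟨-, z, hza, hzb⟩
    have h1 : Ma ≤ zpowers z := ha ▸ zpowers_le.2 hza
    have h2 : Mb ≤ zpowers z := hb ▸ zpowers_le.2 hzb
    exact hab ((hMa.2 _ (_root_.isCyclic_zpowers z) h1).symm.trans (hMb.2 _ (_root_.isCyclic_zpowers z) h2))
  -- non-adjacency in the power graph
  have nadjP : ∀ (a b : G) (Ma Mb : Subgroup G), IsMaxCyclic Ma → IsMaxCyclic Mb →
      zpowers a = Ma → zpowers b = Mb → Ma ≠ Mb → ¬ (powerGraph G).Adj a b := by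
    rintro a b Ma Mb hMa hMb ha hb hab ⟨-, h | h⟩
    · have : Ma ≤ Mb := ha ▸ hb ▸ zpowers_le.2 h
      exact hab ((hMa.2 _ hMb.1 this).symm)
    · have : Mb ≤ Ma := hb ▸ ha ▸ zpowers_le.2 h
      exact hab ((hMb.2 _ hMa.1 this))
  have nE12 := nadjE x₁ x₂ M₁ M₂ hM₁ hM₂ hx₁ hx₂ h12
  have nE13 := nadjE x₁ x₃ M₁ M₃ hM₁ hM₃ hx₁ hx₃ h13
  have nE23 := nadjE x₂ x₃ M₂ M₃ hM₂ hM₃ hx₂ hx₃ h23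
  constructor
  · refine not_isLineGraph_of_claw _ 1 x₁ x₂ x₃ d12 d13 d23 ?_ ?_ ?_
      (nadjP x₁ x₂ M₁ M₂ hM₁ hM₂ hx₁ hx₂ h12)
      (nadjP x₁ x₃ M₁ M₃ hM₁ hM₃ hx₁ hx₃ h13)
      (nadjP x₂ x₃ M₂ M₃ hM₂ hM₃ hx₂ hx₃ h23)
    · exact ⟨hne1.symm, Or.inl (one_mem _)⟩
    · exact ⟨hne2.symm, Or.inl (one_mem _)⟩
    · exact ⟨hne3.symm, Or.inl (one_mem _)⟩
  · refine not_isLineGraph_of_claw _ 1 x₁ x₂ x₃ d12 d13 d23 ?_ ?_ ?_ nE12 nE13 nE23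
    · exact ⟨hne1.symm, x₁, one_mem _, mem_zpowers _⟩
    · exact ⟨hne2.symm, x₂, one_mem _, mem_zpowers _⟩
    · exact ⟨hne3.symm, x₃, one_mem _, mem_zpowers _⟩
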